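/- There exists a constant c > 0 depending only on M such that for every smooth M-periodic zero-mean function ω and every smooth M-periodic zero-mean f̃ with Fourier support in {k : k₁ ≠ 0}: |(I_Ω f̃, B(ω,ω))_{L²}| ≤ c·‖∇f̃‖_{L²}·‖∇ω‖_{L²}·‖Δω‖_{L²}, where B(ω,ω) := (∇⊥Δ⁻¹ω)·∇ω and I_Ω f̃ := i·∑_{k₁≠0} (|k|²/k₁)·f_k·e^{i k·x}. -/

import Mathlib

noncomputable section

open scoped Real

/-- The physical wavenumber in the dual lattice `Z_L` attached to the integer index `n`. -/
def wn (L₁ L₂ : ℝ) (n : ℤ × ℤ) : ℝ × ℝ :=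
  (2 * Real.pi * (n.1 : ℝ) / L₁, 2 * Real.pi * (n.2 : ℝ) / L₂)

/-- `|k|²` for a wavenumber `k ∈ ℝ²`. -/
def ksq (k : ℝ × ℝ) : ℝ := k.1 ^ 2 + k.2 ^ 2

/-- The wedge product `j ∧ k = j₁k₂ − j₂k₁`. -/
def wedge (j k : ℝ × ℝ) : ℝ := j.1 * k.2 - j.2 * k.1

/-- Squared `Hˢ` norm `‖(−Δ)^{s/2} w‖²_{L²}` of a zero-mean field on the torus
`M = [0,L₁] × [−L₂/2,L₂/2]`, computed from its Fourier coefficients `c` via Parseval. -/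
def hsq (L₁ L₂ : ℝ) (s : ℝ) (c : ℤ × ℤ → ℂ) : ℝ :=
  (L₁ * L₂) * ∑' n : ℤ × ℤ, ksq (wn L₁ L₂ n) ^ s * ‖c n‖ ^ 2

/-- The `L²(M)` inner product `(a,b)_{L²} = ∫_M a conj(b)`, via Fourier coefficients. -/
def ip (L₁ L₂ : ℝ) (a b : ℤ × ℤ → ℂ) : ℂ :=
  ((L₁ * L₂ : ℝ) : ℂ) * ∑' n : ℤ × ℤ, a n * (starRingEnd ℂ) (b n)

/-- Interaction coefficient `(j∧k)/|j|²` of the nonlinearity `B`. -/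
def bcoef (L₁ L₂ : ℝ) (j k : ℤ × ℤ) : ℝ :=
  if j = 0 then 0 else wedge (wn L₁ L₂ j) (wn L₁ L₂ k) / ksq (wn L₁ L₂ j)

/-- Fourier coefficients of `B(a,b) := (∇⊥Δ⁻¹a)·∇b` (a convolution). -/
def bconv (L₁ L₂ : ℝ) (a b : ℤ × ℤ → ℂ) (l : ℤ × ℤ) : ℂ :=
  ∑' p : ℤ × ℤ, ((bcoef L₁ L₂ p (l - p) : ℝ) : ℂ) * a p * b (l - p)

/-- `Ω_k := −k₁/|k|²`, i times the eigenvalue of `L = ∂ₓΔ⁻¹` at wavenumber `k`. -/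
def Om (L₁ L₂ : ℝ) (n : ℤ × ℤ) : ℝ := -(wn L₁ L₂ n).1 / ksq (wn L₁ L₂ n)

/-- Rapid decay of Fourier coefficients: the field is smooth on the torus. -/
def regular (L₁ L₂ : ℝ) (c : ℤ × ℤ → ℂ) : Prop :=
  ∀ s : ℝ, Summable fun n : ℤ × ℤ => (1 + ksq (wn L₁ L₂ n)) ^ s * ‖c n‖ ^ 2

/-- The Fourier coefficients of a real-valued field. -/
def realField (c : ℤ × ℤ → ℂ) : Prop := ∀ n, c (-n) = (starRingEnd ℂ) (c n)

/-- Non-zonal (fast) part: Fourier modes with `k₁ ≠ 0`. -/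
def tilde (c : ℤ × ℤ → ℂ) : ℤ × ℤ → ℂ := fun n => if n.1 = 0 then 0 else c n

/-- Zonal (slow) part: Fourier modes with `k₁ = 0`. -/
def zbar (c : ℤ × ℤ → ℂ) : ℤ × ℤ → ℂ := fun n => if n.1 = 0 then c n else 0

/-- The Poincaré constant `c₀` of the torus (the smallest nonzero wavenumber). -/
def poin (L₁ L₂ : ℝ) : ℝ := min (2 * Real.pi / L₁) (2 * Real.pi / L₂)

/-- The coefficients of `∂ₓ c`. -/
def dx (L₁ L₂ : ℝ) (c : ℤ × ℤ → ℂ) : ℤ × ℤ → ℂ :=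
  fun n => Complex.I * (((wn L₁ L₂ n).1 : ℝ) : ℂ) * c n

/-- The coefficients of `∂_y c`. -/
def dy (L₁ L₂ : ℝ) (c : ℤ × ℤ → ℂ) : ℤ × ℤ → ℂ :=
  fun n => Complex.I * (((wn L₁ L₂ n).2 : ℝ) : ℂ) * c n

/-- The coefficients of `Δc`. -/
def lap (L₁ L₂ : ℝ) (c : ℤ × ℤ → ℂ) : ℤ × ℤ → ℂ :=
  fun n => -((ksq (wn L₁ L₂ n) : ℝ) : ℂ) * c n

/-- The operator `I_Ω`: Fourier multiplier with symbol `1/(iΩ_k) = i|k|²/k₁` on `k₁ ≠ 0`. -/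
def iOm (L₁ L₂ : ℝ) (c : ℤ × ℤ → ℂ) : ℤ × ℤ → ℂ := fun n =>
  if n.1 = 0 then 0
  else Complex.I * ((ksq (wn L₁ L₂ n) / (wn L₁ L₂ n).1 : ℝ) : ℂ) * c n

/-- `B_{jkl} = |M| (j∧k)/|j|²` when `j + k = l`, and `0` otherwise. -/
def bco (L₁ L₂ : ℝ) (nj nk nl : ℤ × ℤ) : ℝ :=
  if nj + nk = nl then L₁ * L₂ * wedge (wn L₁ L₂ nj) (wn L₁ L₂ nk) / ksq (wn L₁ L₂ nj)
  else 0

/-- Dot product on `ℝ²`. -/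
def dotR (a b : ℝ × ℝ) : ℝ := a.1 * b.1 + a.2 * b.2

/-- The complex exponential `e^{i k·x}`. -/
def expf (k : ℝ × ℝ) (x : ℝ × ℝ) : ℂ := Complex.exp (Complex.I * ((dotR k x : ℝ) : ℂ))

/-- Directional derivative `∂_v g (x)`. -/
def pd (v : ℝ × ℝ) (g : ℝ × ℝ → ℂ) (x : ℝ × ℝ) : ℂ := fderiv ℝ g x v

/-- `Δ⁻¹ e^{i j·x} := −e^{i j·x}/|j|²`. -/
def invLapExp (j : ℝ × ℝ) : ℝ × ℝ → ℂ := fun x => -expf j x / ((ksq j : ℝ) : ℂ)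

/-- `B(e^{ij·x}, e^{ik·x}) = (∇⊥Δ⁻¹e^{ij·x})·∇e^{ik·x}` pointwise,
with `∇⊥ = (−∂_y, ∂_x)`. -/
def Bpt (j k : ℝ × ℝ) (x : ℝ × ℝ) : ℂ :=
  -pd (0, 1) (invLapExp j) x * pd (1, 0) (expf k) x
    + pd (1, 0) (invLapExp j) x * pd (0, 1) (expf k) x

/-- The `L^∞(M)` norm of the field with Fourier coefficients `c`. -/
def linf (L₁ L₂ : ℝ) (c : ℤ × ℤ → ℂ) : ℝ :=
  ⨆ x : ℝ × ℝ, ‖∑' n : ℤ × ℤ, c n * Complex.exp (Complex.I * ((dotR (wn L₁ L₂ n) x : ℝ) : ℂ))‖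

/-- Euclidean norm of an integer lattice point. -/
def zn (k : ℤ × ℤ) : ℝ := Real.sqrt ((k.1 : ℝ) ^ 2 + (k.2 : ℝ) ^ 2)

/-- A classical solution `ω` (in Fourier representation) of the β-plane vorticity equation
`∂ₜω + B(ω,ω) + (1/ε)Lω + μAω = f` on `M × (0,∞)`:
smooth, `M`-periodic, real-valued and of zero spatial mean for every `t`,
with `f` smooth, periodic and zero-mean.  Mode by mode the equation reads
`d/dt ω_l = f_l − B(ω,ω)_l − (iΩ_l/ε) ω_l − μ|l|² ω_l`. -/
structure IsSolution (L₁ L₂ μ ε : ℝ) (ω f : ℝ → ℤ × ℤ → ℂ) : Prop where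
  mean_ω : ∀ t, ω t 0 = 0
  mean_f : ∀ t, f t 0 = 0
  real_ω : ∀ t, realField (ω t)
  real_f : ∀ t, realField (f t)
  reg_ω : ∀ t, regular L₁ L₂ (ω t)
  reg_f : ∀ t, regular L₁ L₂ (f t)
  cont_ω : ∀ n, Continuous fun t => ω t n
  eqn : ∀ t, 0 < t → ∀ l : ℤ × ℤ,
    HasDerivAt (fun τ => ω τ l)
      (f t l - bconv L₁ L₂ (ω t) (ω t) l
        - Complex.I * ((Om L₁ L₂ l : ℝ) : ℂ) / ((ε : ℝ) : ℂ) * ω t l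
        - ((μ : ℝ) : ℂ) * ((ksq (wn L₁ L₂ l) : ℝ) : ℂ) * ω t l) t


namespace St12


lemma ksq_nonneg (k : ℝ × ℝ) : 0 ≤ ksq k := add_nonneg (sq_nonneg _) (sq_nonneg _)

lemma abs_wedge_le (a b : ℝ × ℝ) :
    |wedge a b| ≤ Real.sqrt (ksq a) * Real.sqrt (ksq b) := by
  have h : wedge a b ^ 2 ≤ ksq a * ksq b := by
    simp only [wedge, ksq]; nlinarith [sq_nonneg (a.1 * b.1 + a.2 * b.2)]
  calc |wedge a b| = Real.sqrt (wedge a b ^ 2) := (Real.sqrt_sq_eq_abs _).symm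
    _ ≤ Real.sqrt (ksq a * ksq b) := Real.sqrt_le_sqrt h
    _ = _ := Real.sqrt_mul (ksq_nonneg a) _

lemma sqrt_ksq_add (a b : ℝ × ℝ) :
    Real.sqrt (ksq (a + b)) ≤ Real.sqrt (ksq a) + Real.sqrt (ksq b) := by
  have hd : a.1 * b.1 + a.2 * b.2 ≤ Real.sqrt (ksq a) * Real.sqrt (ksq b) := by
    have h2 : (a.1 * b.1 + a.2 * b.2) ^ 2 ≤ ksq a * ksq b := by
      simp only [ksq]; nlinarith [sq_nonneg (a.1 * b.2 - a.2 * b.1)]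
    calc a.1 * b.1 + a.2 * b.2 ≤ |a.1 * b.1 + a.2 * b.2| := le_abs_self _
      _ = Real.sqrt ((a.1 * b.1 + a.2 * b.2) ^ 2) := (Real.sqrt_sq_eq_abs _).symm
      _ ≤ Real.sqrt (ksq a * ksq b) := Real.sqrt_le_sqrt h2
      _ = _ := Real.sqrt_mul (ksq_nonneg a) _
  have hA := Real.sq_sqrt (ksq_nonneg a)
  have hB := Real.sq_sqrt (ksq_nonneg b)
  have h3 : ksq (a + b) ≤ (Real.sqrt (ksq a) + Real.sqrt (ksq b)) ^ 2 := by
    have he : ksq (a + b) = ksq a + ksq b + 2 * (a.1 * b.1 + a.2 * b.2) := by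
      simp only [ksq, Prod.fst_add, Prod.snd_add]; ring
    nlinarith [hd]
  calc Real.sqrt (ksq (a + b)) ≤ Real.sqrt ((Real.sqrt (ksq a) + Real.sqrt (ksq b)) ^ 2) :=
      Real.sqrt_le_sqrt h3
    _ = _ := Real.sqrt_sq (by positivity)

lemma wn_add (L₁ L₂ : ℝ) (p q : ℤ × ℤ) :
    wn L₁ L₂ (p + q) = wn L₁ L₂ p + wn L₁ L₂ q := by
  simp only [wn, Prod.fst_add, Prod.snd_add, Prod.mk_add_mk, Prod.mk.injEq]
  constructor <;> (push_cast; ring)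

lemma ksq_wn_pos {L₁ L₂ : ℝ} (hL₁ : 0 < L₁) (hL₂ : 0 < L₂) {p : ℤ × ℤ} (hp : p ≠ 0) :
    0 < ksq (wn L₁ L₂ p) := by
  have h1 : p.1 ≠ 0 ∨ p.2 ≠ 0 := by
    by_contra h; push_neg at h; exact hp (Prod.ext h.1 h.2)
  rcases h1 with h | h
  · have hne : (2 * Real.pi * (p.1 : ℝ) / L₁) ≠ 0 :=
      div_ne_zero (mul_ne_zero (by positivity : (0:ℝ) < 2 * Real.pi).ne'
        (Int.cast_ne_zero.mpr h)) hL₁.ne'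
    exact add_pos_of_pos_of_nonneg (pow_two_pos_of_ne_zero hne) (sq_nonneg _)
  · have hne : (2 * Real.pi * (p.2 : ℝ) / L₂) ≠ 0 :=
      div_ne_zero (mul_ne_zero (by positivity : (0:ℝ) < 2 * Real.pi).ne'
        (Int.cast_ne_zero.mpr h)) hL₂.ne'
    exact add_pos_of_nonneg_of_pos (sq_nonneg _) (pow_two_pos_of_ne_zero hne)

def rr (L₁ L₂ : ℝ) (n : ℤ × ℤ) : ℝ := Real.sqrt (ksq (wn L₁ L₂ n))
def al (L₁ L₂ : ℝ) (p : ℤ × ℤ) : ℝ := if p = 0 then 0 else (ksq (wn L₁ L₂ p))⁻¹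

lemma rr_nonneg (L₁ L₂ : ℝ) (n : ℤ × ℤ) : 0 ≤ rr L₁ L₂ n := Real.sqrt_nonneg _
lemma rr_sq (L₁ L₂ : ℝ) (n : ℤ × ℤ) : rr L₁ L₂ n ^ 2 = ksq (wn L₁ L₂ n) :=
  Real.sq_sqrt (ksq_nonneg _)
lemma al_nonneg (L₁ L₂ : ℝ) (p : ℤ × ℤ) : 0 ≤ al L₁ L₂ p := by
  unfold al; split
  · exact le_refl 0
  · exact inv_nonneg.mpr (ksq_nonneg _)

lemma rr_tri (L₁ L₂ : ℝ) (l p : ℤ × ℤ) :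
    rr L₁ L₂ l ≤ rr L₁ L₂ p + rr L₁ L₂ (l - p) := by
  have h1 : p + (l - p) = l := by abel
  conv_lhs => rw [rr, ← h1, wn_add]
  exact sqrt_ksq_add _ _



lemma cs_summable {a b : ℤ × ℤ → ℝ} (ha : ∀ i, 0 ≤ a i) (hb : ∀ i, 0 ≤ b i)
    (h2a : Summable fun i => a i ^ 2) (h2b : Summable fun i => b i ^ 2) :
    Summable fun i => a i * b i := by
  refine Summable.of_nonneg_of_le (fun i => mul_nonneg (ha i) (hb i)) (fun i => ?_)
    ((h2a.add h2b).mul_left (1 / 2 : ℝ))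
  nlinarith [sq_nonneg (a i - b i)]

lemma finset_cs (s : Finset (ℤ × ℤ)) (a b : ℤ × ℤ → ℝ) (ha : ∀ i, 0 ≤ a i)
    (hb : ∀ i, 0 ≤ b i) :
    ∑ i ∈ s, a i * b i ≤ Real.sqrt (∑ i ∈ s, a i ^ 2) * Real.sqrt (∑ i ∈ s, b i ^ 2) := by
  have h := Finset.sum_mul_sq_le_sq_mul_sq s a b
  have hnn : 0 ≤ ∑ i ∈ s, a i * b i :=
    Finset.sum_nonneg fun i _ => mul_nonneg (ha i) (hb i)
  calc ∑ i ∈ s, a i * b i = Real.sqrt ((∑ i ∈ s, a i * b i) ^ 2) := (Real.sqrt_sq hnn).symm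
    _ ≤ Real.sqrt ((∑ i ∈ s, a i ^ 2) * ∑ i ∈ s, b i ^ 2) := Real.sqrt_le_sqrt h
    _ = _ := Real.sqrt_mul (Finset.sum_nonneg fun i _ => sq_nonneg _) _

lemma cs_tsum {a b : ℤ × ℤ → ℝ} (ha : ∀ i, 0 ≤ a i) (hb : ∀ i, 0 ≤ b i)
    (h2a : Summable fun i => a i ^ 2) (h2b : Summable fun i => b i ^ 2) :
    ∑' i, a i * b i ≤ Real.sqrt (∑' i, a i ^ 2) * Real.sqrt (∑' i, b i ^ 2) := by
  refine Summable.tsum_le_of_sum_le (cs_summable ha hb h2a h2b) fun s => ?_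
  refine (finset_cs s a b ha hb).trans ?_
  exact mul_le_mul (Real.sqrt_le_sqrt (Summable.sum_le_tsum s (fun i _ => sq_nonneg _) h2a))
    (Real.sqrt_le_sqrt (Summable.sum_le_tsum s (fun i _ => sq_nonneg _) h2b))
    (Real.sqrt_nonneg _) (Real.sqrt_nonneg _)

lemma inner_summable {u v : ℤ × ℤ → ℝ} (hu : ∀ p, 0 ≤ u p) (hv : ∀ k, 0 ≤ v k)
    (hv2 : Summable fun k => v k ^ 2) (hu1 : Summable u) (l : ℤ × ℤ) :
    Summable fun p => u p * v (l - p) := by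
  refine Summable.of_nonneg_of_le (fun p => mul_nonneg (hu p) (hv _)) (fun p => ?_)
    (hu1.mul_right (Real.sqrt (∑' k, v k ^ 2)))
  have h1 : v (l - p) ≤ Real.sqrt (∑' k, v k ^ 2) := by
    rw [← Real.sqrt_sq (hv (l - p))]
    exact Real.sqrt_le_sqrt (Summable.le_tsum hv2 _ fun j _ => sq_nonneg _)
  exact mul_le_mul_of_nonneg_left h1 (hu p)

lemma key {Φ u v : ℤ × ℤ → ℝ} (hΦ : ∀ l, 0 ≤ Φ l) (hu : ∀ p, 0 ≤ u p) (hv : ∀ k, 0 ≤ v k)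
    (hΦ2 : Summable fun l => Φ l ^ 2) (hv2 : Summable fun k => v k ^ 2) (hu1 : Summable u) :
    Summable (fun l => Φ l * ∑' p, u p * v (l - p)) ∧
      ∑' l, Φ l * ∑' p, u p * v (l - p) ≤
        (∑' p, u p) * (Real.sqrt (∑' l, Φ l ^ 2) * Real.sqrt (∑' k, v k ^ 2)) := by
  have hbound : ∀ s : Finset (ℤ × ℤ),
      ∑ l ∈ s, Φ l * ∑' p, u p * v (l - p) ≤
        (∑' p, u p) * (Real.sqrt (∑' l, Φ l ^ 2) * Real.sqrt (∑' k, v k ^ 2)) := by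
    intro s
    have h2 : ∑ l ∈ s, Φ l * ∑' p, u p * v (l - p)
        = ∑' p, ∑ l ∈ s, Φ l * (u p * v (l - p)) := by
      rw [Summable.tsum_finsetSum fun l _ => (inner_summable hu hv hv2 hu1 l).mul_left (Φ l)]
      exact Finset.sum_congr rfl fun l _ => tsum_mul_left.symm
    rw [h2]
    have h3 : ∀ p, ∑ l ∈ s, Φ l * (u p * v (l - p)) ≤
        u p * (Real.sqrt (∑' l, Φ l ^ 2) * Real.sqrt (∑' k, v k ^ 2)) := by
      intro p
      have h4 : ∑ l ∈ s, Φ l * (u p * v (l - p)) = u p * ∑ l ∈ s, Φ l * v (l - p) := by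
        rw [Finset.mul_sum]
        exact Finset.sum_congr rfl fun l _ => by ring
      rw [h4]
      refine mul_le_mul_of_nonneg_left ?_ (hu p)
      refine (finset_cs s Φ (fun l => v (l - p)) hΦ fun l => hv _).trans ?_
      have hvshift : Summable fun l : ℤ × ℤ => v (l - p) ^ 2 := by
        have h5 := hv2.comp_injective (Equiv.subRight p).injective
        exact h5
      have ht : ∑' l : ℤ × ℤ, v (l - p) ^ 2 = ∑' k, v k ^ 2 :=
        (Equiv.subRight p).tsum_eq fun k => v k ^ 2
      exact mul_le_mul
        (Real.sqrt_le_sqrt (Summable.sum_le_tsum s (fun i _ => sq_nonneg _) hΦ2))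
        (Real.sqrt_le_sqrt ((Summable.sum_le_tsum s (fun i _ => sq_nonneg _) hvshift).trans
          (le_of_eq ht)))
        (Real.sqrt_nonneg _) (Real.sqrt_nonneg _)
    calc ∑' p, ∑ l ∈ s, Φ l * (u p * v (l - p))
        ≤ ∑' p, u p * (Real.sqrt (∑' l, Φ l ^ 2) * Real.sqrt (∑' k, v k ^ 2)) :=
          Summable.tsum_le_tsum h3
            (summable_sum fun l _ => (inner_summable hu hv hv2 hu1 l).mul_left (Φ l))
            (hu1.mul_right _)
      _ = _ := tsum_mul_right
  have hnn : ∀ l, 0 ≤ Φ l * ∑' p, u p * v (l - p) := fun l =>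
    mul_nonneg (hΦ l) (tsum_nonneg fun p => mul_nonneg (hu p) (hv _))
  have hsum : Summable fun l => Φ l * ∑' p, u p * v (l - p) :=
    summable_of_sum_le hnn hbound
  exact ⟨hsum, Summable.tsum_le_of_sum_le hsum hbound⟩


lemma alpha_sq_summable {L₁ L₂ : ℝ} (hL₁ : 0 < L₁) (hL₂ : 0 < L₂) :
    Summable fun p : ℤ × ℤ => al L₁ L₂ p ^ 2 := by
  set m : ℝ := min (2 * Real.pi / L₁) (2 * Real.pi / L₂) with hm
  have hmpos : 0 < m := lt_min (by positivity) (by positivity)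
  have hone : Summable fun i : ℤ => (1 + (i : ℝ) ^ 2)⁻¹ := by
    have h2 : Summable fun i : ℤ => 1 / (i : ℝ) ^ 2 :=
      Real.summable_one_div_int_pow.mpr one_lt_two
    have h0 : Summable fun i : ℤ => if i = 0 then (1 : ℝ) else 0 :=
      summable_of_ne_finset_zero (s := {0}) fun i hi => if_neg (by simpa using hi)
    refine Summable.of_nonneg_of_le (fun i => by positivity) (fun i => ?_) (h2.add h0)
    by_cases hi : i = 0
    · simp [hi]
    · rw [if_neg hi, add_zero, one_div]
      have hpos : 0 < ((i : ℝ)) ^ 2 := pow_two_pos_of_ne_zero (Int.cast_ne_zero.mpr hi)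
      exact inv_anti₀ hpos (by linarith)
  have hprod : Summable fun p : ℤ × ℤ => (1 + (p.1 : ℝ) ^ 2)⁻¹ * (1 + (p.2 : ℝ) ^ 2)⁻¹ :=
    hone.mul_of_nonneg hone (fun i => by positivity) (fun i => by positivity)
  refine Summable.of_nonneg_of_le (fun p => sq_nonneg _) (fun p => ?_)
    (hprod.mul_left (4 / m ^ 4))
  by_cases hp : p = 0
  · have h0 : al L₁ L₂ p = 0 := by rw [al, if_pos hp]
    rw [h0]
    simp only [zero_pow, ne_eq, OfNat.ofNat_ne_zero, not_false_eq_true]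
    exact mul_nonneg (div_nonneg (by norm_num) (pow_nonneg hmpos.le 4))
      (mul_nonneg (inv_nonneg.mpr (by positivity)) (inv_nonneg.mpr (by positivity)))
  · have hxy1 : (1 : ℝ) ≤ (p.1 : ℝ) ^ 2 + (p.2 : ℝ) ^ 2 := by
      have h1 : p.1 ≠ 0 ∨ p.2 ≠ 0 := by
        by_contra h; push_neg at h; exact hp (Prod.ext h.1 h.2)
      have h2 : (1 : ℤ) ≤ p.1 ^ 2 + p.2 ^ 2 := by
        rcases h1 with h | h
        · nlinarith [sq_nonneg p.2, Int.one_le_abs h, sq_abs p.1, abs_nonneg p.1]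
        · nlinarith [sq_nonneg p.1, Int.one_le_abs h, sq_abs p.2, abs_nonneg p.2]
      exact_mod_cast h2
    have hksq : m ^ 2 * ((p.1 : ℝ) ^ 2 + (p.2 : ℝ) ^ 2) ≤ ksq (wn L₁ L₂ p) := by
      have e1 : ksq (wn L₁ L₂ p)
          = (2 * Real.pi / L₁) ^ 2 * (p.1 : ℝ) ^ 2 + (2 * Real.pi / L₂) ^ 2 * (p.2 : ℝ) ^ 2 := by
        simp only [ksq, wn]; ring
      have hm1 : m ^ 2 ≤ (2 * Real.pi / L₁) ^ 2 := pow_le_pow_left₀ hmpos.le (min_le_left _ _) 2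
      have hm2 : m ^ 2 ≤ (2 * Real.pi / L₂) ^ 2 := pow_le_pow_left₀ hmpos.le (min_le_right _ _) 2
      rw [e1]; nlinarith [sq_nonneg ((p.1 : ℝ)), sq_nonneg ((p.2 : ℝ))]
    have hD : (1 + (p.1 : ℝ) ^ 2) * (1 + (p.2 : ℝ) ^ 2)
        ≤ 4 * ((p.1 : ℝ) ^ 2 + (p.2 : ℝ) ^ 2) ^ 2 := by
      nlinarith [hxy1, sq_nonneg ((p.1 : ℝ) ^ 2 - (p.2 : ℝ) ^ 2),
        sq_nonneg ((p.1 : ℝ) * (p.2 : ℝ)), sq_nonneg ((p.1 : ℝ) ^ 2 + (p.2 : ℝ) ^ 2 - 1),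
        sq_nonneg ((p.1 : ℝ)), sq_nonneg ((p.2 : ℝ))]
    have hkpos := ksq_wn_pos hL₁ hL₂ hp
    have hsq2 : (m ^ 2 * ((p.1 : ℝ) ^ 2 + (p.2 : ℝ) ^ 2)) ^ 2 ≤ ksq (wn L₁ L₂ p) ^ 2 :=
      pow_le_pow_left₀ (by positivity) hksq 2
    have hDE : m ^ 4 * ((1 + (p.1 : ℝ) ^ 2) * (1 + (p.2 : ℝ) ^ 2))
        ≤ 4 * ksq (wn L₁ L₂ p) ^ 2 := by
      nlinarith [mul_le_mul_of_nonneg_left hD (show (0 : ℝ) ≤ m ^ 4 by positivity), hsq2]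
    have hrhs : 4 / m ^ 4 * ((1 + (p.1 : ℝ) ^ 2)⁻¹ * (1 + (p.2 : ℝ) ^ 2)⁻¹)
        = 4 / (m ^ 4 * ((1 + (p.1 : ℝ) ^ 2) * (1 + (p.2 : ℝ) ^ 2))) := by
      rw [div_mul_eq_mul_div, div_eq_div_iff (by positivity) (by positivity)]
      field_simp
    rw [al, if_neg hp, inv_pow, hrhs, inv_eq_one_div,
      div_le_div_iff₀ (pow_pos hkpos 2) (by positivity)]
    linarith [hDE]

lemma reg_pow {L₁ L₂ : ℝ} {c : ℤ × ℤ → ℂ} (hc : regular L₁ L₂ c) (d : ℕ) :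
    Summable fun n => ksq (wn L₁ L₂ n) ^ d * ‖c n‖ ^ 2 := by
  have h := hc (d : ℝ)
  refine Summable.of_nonneg_of_le
    (fun n => mul_nonneg (pow_nonneg (ksq_nonneg _) d) (sq_nonneg _)) (fun n => ?_) h
  have h1 : (1 + ksq (wn L₁ L₂ n)) ^ ((d : ℕ) : ℝ) = (1 + ksq (wn L₁ L₂ n)) ^ (d : ℕ) :=
    Real.rpow_natCast _ d
  rw [h1]
  exact mul_le_mul_of_nonneg_right
    (pow_le_pow_left₀ (ksq_nonneg _) (le_add_of_nonneg_left zero_le_one) d) (sq_nonneg _)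

lemma coef_bound {L₁ L₂ : ℝ} (hL₁ : 0 < L₁) (hL₂ : 0 < L₂) (W : ℤ × ℤ → ℝ)
    (hW : ∀ n, 0 ≤ W n) (l p : ℤ × ℤ) :
    ksq (wn L₁ L₂ l) * (|bcoef L₁ L₂ p (l - p)| * (W p * W (l - p))) ≤
      rr L₁ L₂ l * (W p * (rr L₁ L₂ (l - p) * W (l - p)) +
        (al L₁ L₂ p * (rr L₁ L₂ p * W p)) * (ksq (wn L₁ L₂ (l - p)) * W (l - p))) := by
  by_cases hp : p = 0
  · have h0 : bcoef L₁ L₂ p (l - p) = 0 := by rw [bcoef, if_pos hp]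
    rw [h0, abs_zero, zero_mul, mul_zero]
    exact mul_nonneg (rr_nonneg _ _ _) (add_nonneg
      (mul_nonneg (hW _) (mul_nonneg (rr_nonneg _ _ _) (hW _)))
      (mul_nonneg (mul_nonneg (al_nonneg _ _ _) (mul_nonneg (rr_nonneg _ _ _) (hW _)))
        (mul_nonneg (ksq_nonneg _) (hW _))))
  · have hkp := ksq_wn_pos hL₁ hL₂ hp
    have hapos : 0 < rr L₁ L₂ p := Real.sqrt_pos.mpr hkp
    set a := rr L₁ L₂ p with hadef
    set b := rr L₁ L₂ (l - p) with hbdef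
    set cc := rr L₁ L₂ l with hccdef
    have ha2 : ksq (wn L₁ L₂ p) = a ^ 2 := (rr_sq L₁ L₂ p).symm
    have hb2 : ksq (wn L₁ L₂ (l - p)) = b ^ 2 := (rr_sq L₁ L₂ (l - p)).symm
    have hc2 : ksq (wn L₁ L₂ l) = cc ^ 2 := (rr_sq L₁ L₂ l).symm
    have tri : cc ≤ a + b := rr_tri L₁ L₂ l p
    have hbc : |bcoef L₁ L₂ p (l - p)| ≤ a * b / a ^ 2 := by
      rw [bcoef, if_neg hp, abs_div, abs_of_pos hkp, ha2]
      exact div_le_div_of_nonneg_right (abs_wedge_le _ _) (by positivity)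
    have hal : al L₁ L₂ p = (a ^ 2)⁻¹ := by rw [al, if_neg hp, ha2]
    rw [hal, hb2, hc2]
    calc cc ^ 2 * (|bcoef L₁ L₂ p (l - p)| * (W p * W (l - p)))
        ≤ cc ^ 2 * ((a * b / a ^ 2) * (W p * W (l - p))) := by
          exact mul_le_mul_of_nonneg_left
            (mul_le_mul_of_nonneg_right hbc (mul_nonneg (hW _) (hW _))) (sq_nonneg _)
      _ ≤ cc * (W p * (b * W (l - p)) + ((a ^ 2)⁻¹ * (a * W p)) * (b ^ 2 * W (l - p))) := by
          have hfac : cc * (W p * (b * W (l - p)) + ((a ^ 2)⁻¹ * (a * W p)) * (b ^ 2 * W (l - p)))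
              - cc ^ 2 * ((a * b / a ^ 2) * (W p * W (l - p)))
              = (cc * b * W p * W (l - p) / a) * ((a + b) - cc) := by
            field_simp
          have h1 : 0 ≤ (cc * b * W p * W (l - p) / a) * ((a + b) - cc) :=
            mul_nonneg (div_nonneg (mul_nonneg (mul_nonneg
              (mul_nonneg (rr_nonneg _ _ _) (rr_nonneg _ _ _)) (hW _)) (hW _)) hapos.le)
              (by linarith)
          linarith [hfac, h1]

lemma bcoef_bound {L₁ L₂ : ℝ} (hL₁ : 0 < L₁) (hL₂ : 0 < L₂) (W : ℤ × ℤ → ℝ)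
    (hW : ∀ n, 0 ≤ W n) (l p : ℤ × ℤ) :
    |bcoef L₁ L₂ p (l - p)| * (W p * W (l - p)) ≤
      (al L₁ L₂ p * (rr L₁ L₂ p * W p)) * (rr L₁ L₂ (l - p) * W (l - p)) := by
  by_cases hp : p = 0
  · simp [bcoef, al, hp]
  · have hkp := ksq_wn_pos hL₁ hL₂ hp
    have hapos : 0 < rr L₁ L₂ p := Real.sqrt_pos.mpr hkp
    have hbc : |bcoef L₁ L₂ p (l - p)| ≤ rr L₁ L₂ p * rr L₁ L₂ (l - p) / ksq (wn L₁ L₂ p) := by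
      rw [bcoef, if_neg hp, abs_div, abs_of_pos hkp]
      exact div_le_div_of_nonneg_right (abs_wedge_le _ _) hkp.le
    have heq : (al L₁ L₂ p * (rr L₁ L₂ p * W p)) * (rr L₁ L₂ (l - p) * W (l - p))
        = (rr L₁ L₂ p * rr L₁ L₂ (l - p) / ksq (wn L₁ L₂ p)) * (W p * W (l - p)) := by
      rw [al, if_neg hp, ← rr_sq L₁ L₂ p]
      have : rr L₁ L₂ p ≠ 0 := hapos.ne'
      field_simp
    rw [heq]
    exact mul_le_mul_of_nonneg_right hbc (mul_nonneg (hW _) (hW _))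

lemma iOm_bound {L₁ L₂ : ℝ} (hL₁ : 0 < L₁) (hL₂ : 0 < L₂) (f : ℤ × ℤ → ℂ) (l : ℤ × ℤ) :
    ‖iOm L₁ L₂ f l‖ ≤ (L₁ / (2 * Real.pi)) * (ksq (wn L₁ L₂ l) * ‖f l‖) := by
  rw [iOm]
  by_cases hl : l.1 = 0
  · rw [if_pos hl, norm_zero]
    exact mul_nonneg (by positivity) (mul_nonneg (ksq_nonneg _) (norm_nonneg _))
  · rw [if_neg hl, norm_mul, norm_mul, Complex.norm_I, one_mul, Complex.norm_real,
      Real.norm_eq_abs]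
    have hw1 : 2 * Real.pi / L₁ ≤ |(wn L₁ L₂ l).1| := by
      have h1 : (1 : ℝ) ≤ |(l.1 : ℝ)| := by
        rw [← Int.cast_abs]; exact_mod_cast Int.one_le_abs hl
      show 2 * Real.pi / L₁ ≤ |2 * Real.pi * (l.1 : ℝ) / L₁|
      rw [abs_div, abs_of_pos hL₁, abs_mul,
        abs_of_pos (by positivity : (0 : ℝ) < 2 * Real.pi)]
      exact div_le_div_of_nonneg_right (le_mul_of_one_le_right (by positivity) h1) hL₁.le
    have habs : |ksq (wn L₁ L₂ l) / (wn L₁ L₂ l).1|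
        ≤ L₁ / (2 * Real.pi) * ksq (wn L₁ L₂ l) := by
      rw [abs_div, abs_of_nonneg (ksq_nonneg _)]
      have h2 : 0 < 2 * Real.pi / L₁ := by positivity
      calc ksq (wn L₁ L₂ l) / |(wn L₁ L₂ l).1| ≤ ksq (wn L₁ L₂ l) / (2 * Real.pi / L₁) := by
            apply div_le_div_of_nonneg_left (ksq_nonneg _) h2 hw1
        _ = L₁ / (2 * Real.pi) * ksq (wn L₁ L₂ l) := by
            rw [div_div_eq_mul_div, div_mul_eq_mul_div, mul_comm]
      done
    calc |ksq (wn L₁ L₂ l) / (wn L₁ L₂ l).1| * ‖f l‖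
        ≤ (L₁ / (2 * Real.pi) * ksq (wn L₁ L₂ l)) * ‖f l‖ :=
          mul_le_mul_of_nonneg_right habs (norm_nonneg _)
      _ = L₁ / (2 * Real.pi) * (ksq (wn L₁ L₂ l) * ‖f l‖) := by ring


end St12

/-- estimate (3.21) of the paper.  There is `c > 0` depending only on
`M` such that for every smooth zero-mean real field `ω` and every smooth zero-mean real
`f̃` with Fourier support in `{k₁ ≠ 0}`:
`|(I_Ω f̃, B(ω,ω))_{L²}| ≤ c ‖∇f̃‖ ‖∇ω‖ ‖Δω‖`. -/
theorem statement12 (L₁ L₂ : ℝ) (hL₁ : 0 < L₁) (hL₂ : 0 < L₂) :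
    ∃ c : ℝ, 0 < c ∧
      ∀ ω f : ℤ × ℤ → ℂ,
        ω 0 = 0 → realField ω → regular L₁ L₂ ω →
        realField f → regular L₁ L₂ f → (∀ n : ℤ × ℤ, n.1 = 0 → f n = 0) →
        ‖ip L₁ L₂ (iOm L₁ L₂ f) (bconv L₁ L₂ ω ω)‖
          ≤ c * Real.sqrt (hsq L₁ L₂ 1 f) * Real.sqrt (hsq L₁ L₂ 1 ω) *
              Real.sqrt (hsq L₁ L₂ 2 ω) := by
  classical
  have hC₁pos : 0 < L₁ / (2 * Real.pi) := by positivity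
  set C₁ : ℝ := L₁ / (2 * Real.pi) with hC₁def
  have hαsq : Summable fun p : ℤ × ℤ => St12.al L₁ L₂ p ^ 2 := St12.alpha_sq_summable hL₁ hL₂
  set Sα : ℝ := ∑' p : ℤ × ℤ, St12.al L₁ L₂ p ^ 2 with hSαdef
  have hSα : 0 ≤ Sα := tsum_nonneg fun p => sq_nonneg _
  have hKpos : 0 < Sα + 1 := by linarith
  have hMpos : 0 < L₁ * L₂ := mul_pos hL₁ hL₂
  refine ⟨2 * C₁ * Real.sqrt (Sα + 1) / Real.sqrt (L₁ * L₂),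
    div_pos (mul_pos (mul_pos (by norm_num : (0:ℝ) < 2) hC₁pos) (Real.sqrt_pos.mpr hKpos))
      (Real.sqrt_pos.mpr hMpos), ?_⟩
  intro ω f hω0 hωre hωreg hfre hfreg hfsupp
  -- summability of the weighted coefficient sequences
  have hΦ2 : Summable fun l : ℤ × ℤ => (St12.rr L₁ L₂ l * ‖f l‖) ^ 2 :=
    (St12.reg_pow hfreg 1).congr fun n => by rw [mul_pow, St12.rr_sq, pow_one]
  have hv₁2 : Summable fun k : ℤ × ℤ => (St12.rr L₁ L₂ k * ‖ω k‖) ^ 2 :=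
    (St12.reg_pow hωreg 1).congr fun n => by rw [mul_pow, St12.rr_sq, pow_one]
  have hv₂2 : Summable fun k : ℤ × ℤ => (ksq (wn L₁ L₂ k) * ‖ω k‖) ^ 2 :=
    (St12.reg_pow hωreg 2).congr fun n => by rw [mul_pow]
  have hu₂ : Summable fun p : ℤ × ℤ => St12.al L₁ L₂ p * (St12.rr L₁ L₂ p * ‖ω p‖) :=
    St12.cs_summable (St12.al_nonneg L₁ L₂)
      (fun p => mul_nonneg (St12.rr_nonneg _ _ _) (norm_nonneg _)) hαsq hv₁2
  have hWeq : ∀ p : ℤ × ℤ, ‖ω p‖ = St12.al L₁ L₂ p * (ksq (wn L₁ L₂ p) * ‖ω p‖) := by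
    intro p
    by_cases hp : p = 0
    · subst hp; rw [hω0]; simp [St12.al]
    · rw [St12.al, if_neg hp, ← mul_assoc,
        inv_mul_cancel₀ (St12.ksq_wn_pos hL₁ hL₂ hp).ne', one_mul]
  have hu₁ : Summable fun p : ℤ × ℤ => ‖ω p‖ :=
    (St12.cs_summable (St12.al_nonneg L₁ L₂)
      (fun p => mul_nonneg (St12.ksq_nonneg _) (norm_nonneg _)) hαsq hv₂2).congr
      fun p => (hWeq p).symm
  -- the two trilinear estimates
  obtain ⟨hsum1, hle1⟩ := St12.key (Φ := fun l => St12.rr L₁ L₂ l * ‖f l‖)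
    (u := fun p => ‖ω p‖) (v := fun k => St12.rr L₁ L₂ k * ‖ω k‖)
    (fun l => mul_nonneg (St12.rr_nonneg _ _ _) (norm_nonneg _))
    (fun p => norm_nonneg _)
    (fun k => mul_nonneg (St12.rr_nonneg _ _ _) (norm_nonneg _)) hΦ2 hv₁2 hu₁
  obtain ⟨hsum2, hle2⟩ := St12.key (Φ := fun l => St12.rr L₁ L₂ l * ‖f l‖)
    (u := fun p => St12.al L₁ L₂ p * (St12.rr L₁ L₂ p * ‖ω p‖))
    (v := fun k => ksq (wn L₁ L₂ k) * ‖ω k‖)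
    (fun l => mul_nonneg (St12.rr_nonneg _ _ _) (norm_nonneg _))
    (fun p => mul_nonneg (St12.al_nonneg _ _ _)
      (mul_nonneg (St12.rr_nonneg _ _ _) (norm_nonneg _)))
    (fun k => mul_nonneg (St12.ksq_nonneg _) (norm_nonneg _)) hΦ2 hv₂2 hu₂
  have hsum1' : Summable fun l : ℤ × ℤ => (St12.rr L₁ L₂ l * ‖f l‖) *
      ∑' p : ℤ × ℤ, ‖ω p‖ * (St12.rr L₁ L₂ (l - p) * ‖ω (l - p)‖) := hsum1
  have hsum2' : Summable fun l : ℤ × ℤ => (St12.rr L₁ L₂ l * ‖f l‖) *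
      ∑' p : ℤ × ℤ, (St12.al L₁ L₂ p * (St12.rr L₁ L₂ p * ‖ω p‖)) *
        (ksq (wn L₁ L₂ (l - p)) * ‖ω (l - p)‖) := hsum2
  have hle1' : (∑' l : ℤ × ℤ, (St12.rr L₁ L₂ l * ‖f l‖) *
      ∑' p : ℤ × ℤ, ‖ω p‖ * (St12.rr L₁ L₂ (l - p) * ‖ω (l - p)‖)) ≤
      (∑' p : ℤ × ℤ, ‖ω p‖) *
        (Real.sqrt (∑' l : ℤ × ℤ, (St12.rr L₁ L₂ l * ‖f l‖) ^ 2) *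
          Real.sqrt (∑' k : ℤ × ℤ, (St12.rr L₁ L₂ k * ‖ω k‖) ^ 2)) := hle1
  have hle2' : (∑' l : ℤ × ℤ, (St12.rr L₁ L₂ l * ‖f l‖) *
      ∑' p : ℤ × ℤ, (St12.al L₁ L₂ p * (St12.rr L₁ L₂ p * ‖ω p‖)) *
        (ksq (wn L₁ L₂ (l - p)) * ‖ω (l - p)‖)) ≤
      (∑' p : ℤ × ℤ, St12.al L₁ L₂ p * (St12.rr L₁ L₂ p * ‖ω p‖)) *
        (Real.sqrt (∑' l : ℤ × ℤ, (St12.rr L₁ L₂ l * ‖f l‖) ^ 2) *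
          Real.sqrt (∑' k : ℤ × ℤ, (ksq (wn L₁ L₂ k) * ‖ω k‖) ^ 2)) := hle2
  -- bounds on the ℓ¹ factors
  have hU₁ : (∑' p : ℤ × ℤ, ‖ω p‖) ≤
      Real.sqrt (Sα + 1) * Real.sqrt (∑' k : ℤ × ℤ, (ksq (wn L₁ L₂ k) * ‖ω k‖) ^ 2) := by
    calc (∑' p : ℤ × ℤ, ‖ω p‖)
        = ∑' p : ℤ × ℤ, St12.al L₁ L₂ p * (ksq (wn L₁ L₂ p) * ‖ω p‖) := tsum_congr hWeq
      _ ≤ Real.sqrt (∑' p : ℤ × ℤ, St12.al L₁ L₂ p ^ 2) *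
            Real.sqrt (∑' k : ℤ × ℤ, (ksq (wn L₁ L₂ k) * ‖ω k‖) ^ 2) :=
          St12.cs_tsum (St12.al_nonneg L₁ L₂)
            (fun p => mul_nonneg (St12.ksq_nonneg _) (norm_nonneg _)) hαsq hv₂2
      _ ≤ _ := by
          refine mul_le_mul_of_nonneg_right (Real.sqrt_le_sqrt ?_) (Real.sqrt_nonneg _)
          rw [← hSαdef]; linarith
  have hU₂ : (∑' p : ℤ × ℤ, St12.al L₁ L₂ p * (St12.rr L₁ L₂ p * ‖ω p‖)) ≤
      Real.sqrt (Sα + 1) * Real.sqrt (∑' k : ℤ × ℤ, (St12.rr L₁ L₂ k * ‖ω k‖) ^ 2) := by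
    calc (∑' p : ℤ × ℤ, St12.al L₁ L₂ p * (St12.rr L₁ L₂ p * ‖ω p‖))
        ≤ Real.sqrt (∑' p : ℤ × ℤ, St12.al L₁ L₂ p ^ 2) *
            Real.sqrt (∑' k : ℤ × ℤ, (St12.rr L₁ L₂ k * ‖ω k‖) ^ 2) :=
          St12.cs_tsum (St12.al_nonneg L₁ L₂)
            (fun p => mul_nonneg (St12.rr_nonneg _ _ _) (norm_nonneg _)) hαsq hv₁2
      _ ≤ _ := by
          refine mul_le_mul_of_nonneg_right (Real.sqrt_le_sqrt ?_) (Real.sqrt_nonneg _)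
          rw [← hSαdef]; linarith
  -- pointwise bound on the summand of the inner product
  have hbsum : ∀ l : ℤ × ℤ, Summable fun p : ℤ × ℤ =>
      |bcoef L₁ L₂ p (l - p)| * (‖ω p‖ * ‖ω (l - p)‖) := by
    intro l
    refine Summable.of_nonneg_of_le
      (fun p => mul_nonneg (abs_nonneg _) (mul_nonneg (norm_nonneg _) (norm_nonneg _)))
      (fun p => St12.bcoef_bound hL₁ hL₂ (fun n => ‖ω n‖) (fun n => norm_nonneg _) l p) ?_
    exact St12.inner_summable
      (fun p => mul_nonneg (St12.al_nonneg _ _ _)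
        (mul_nonneg (St12.rr_nonneg _ _ _) (norm_nonneg _)))
      (fun k => mul_nonneg (St12.rr_nonneg _ _ _) (norm_nonneg _)) hv₁2 hu₂ l
  have h_bconv : ∀ l : ℤ × ℤ, ‖bconv L₁ L₂ ω ω l‖ ≤
      ∑' p : ℤ × ℤ, |bcoef L₁ L₂ p (l - p)| * (‖ω p‖ * ‖ω (l - p)‖) := by
    intro l
    have hnorm : ∀ p : ℤ × ℤ, ‖((bcoef L₁ L₂ p (l - p) : ℝ) : ℂ) * ω p * ω (l - p)‖
        = |bcoef L₁ L₂ p (l - p)| * (‖ω p‖ * ‖ω (l - p)‖) := by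
      intro p
      rw [norm_mul, norm_mul, Complex.norm_real, Real.norm_eq_abs, mul_assoc]
    calc ‖bconv L₁ L₂ ω ω l‖
        ≤ ∑' p : ℤ × ℤ, ‖((bcoef L₁ L₂ p (l - p) : ℝ) : ℂ) * ω p * ω (l - p)‖ :=
          norm_tsum_le_tsum_norm ((hbsum l).congr fun p => (hnorm p).symm)
      _ = _ := tsum_congr hnorm
  have hGle : ∀ l : ℤ × ℤ, ‖iOm L₁ L₂ f l‖ * ‖bconv L₁ L₂ ω ω l‖ ≤
      (C₁ * (St12.rr L₁ L₂ l * ‖f l‖)) *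
        ((∑' p : ℤ × ℤ, ‖ω p‖ * (St12.rr L₁ L₂ (l - p) * ‖ω (l - p)‖)) +
          ∑' p : ℤ × ℤ, (St12.al L₁ L₂ p * (St12.rr L₁ L₂ p * ‖ω p‖)) *
            (ksq (wn L₁ L₂ (l - p)) * ‖ω (l - p)‖)) := by
    intro l
    have s1 : Summable fun p : ℤ × ℤ => ‖ω p‖ * (St12.rr L₁ L₂ (l - p) * ‖ω (l - p)‖) :=
      St12.inner_summable (fun p => norm_nonneg _)
        (fun k => mul_nonneg (St12.rr_nonneg _ _ _) (norm_nonneg _)) hv₁2 hu₁ l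
    have s2 : Summable fun p : ℤ × ℤ =>
        (St12.al L₁ L₂ p * (St12.rr L₁ L₂ p * ‖ω p‖)) * (ksq (wn L₁ L₂ (l - p)) * ‖ω (l - p)‖) :=
      St12.inner_summable
        (fun p => mul_nonneg (St12.al_nonneg _ _ _)
          (mul_nonneg (St12.rr_nonneg _ _ _) (norm_nonneg _)))
        (fun k => mul_nonneg (St12.ksq_nonneg _) (norm_nonneg _)) hv₂2 hu₂ l
    have hpt : ∀ p : ℤ × ℤ,
        (C₁ * (ksq (wn L₁ L₂ l) * ‖f l‖)) * (|bcoef L₁ L₂ p (l - p)| * (‖ω p‖ * ‖ω (l - p)‖))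
          ≤ (C₁ * (St12.rr L₁ L₂ l * ‖f l‖)) *
            (‖ω p‖ * (St12.rr L₁ L₂ (l - p) * ‖ω (l - p)‖) +
              (St12.al L₁ L₂ p * (St12.rr L₁ L₂ p * ‖ω p‖)) *
                (ksq (wn L₁ L₂ (l - p)) * ‖ω (l - p)‖)) := by
      intro p
      have h := mul_le_mul_of_nonneg_left
        (St12.coef_bound hL₁ hL₂ (fun n => ‖ω n‖) (fun n => norm_nonneg _) l p)
        (mul_nonneg hC₁pos.le (norm_nonneg (f l)))
      calc (C₁ * (ksq (wn L₁ L₂ l) * ‖f l‖)) *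
            (|bcoef L₁ L₂ p (l - p)| * (‖ω p‖ * ‖ω (l - p)‖))
          = (C₁ * ‖f l‖) *
            (ksq (wn L₁ L₂ l) * (|bcoef L₁ L₂ p (l - p)| * (‖ω p‖ * ‖ω (l - p)‖))) := by ring
        _ ≤ (C₁ * ‖f l‖) * (St12.rr L₁ L₂ l *
              (‖ω p‖ * (St12.rr L₁ L₂ (l - p) * ‖ω (l - p)‖) +
                (St12.al L₁ L₂ p * (St12.rr L₁ L₂ p * ‖ω p‖)) *
                  (ksq (wn L₁ L₂ (l - p)) * ‖ω (l - p)‖))) := h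
        _ = _ := by ring
    calc ‖iOm L₁ L₂ f l‖ * ‖bconv L₁ L₂ ω ω l‖
        ≤ (C₁ * (ksq (wn L₁ L₂ l) * ‖f l‖)) *
            ∑' p : ℤ × ℤ, |bcoef L₁ L₂ p (l - p)| * (‖ω p‖ * ‖ω (l - p)‖) :=
          mul_le_mul (St12.iOm_bound hL₁ hL₂ f l) (h_bconv l) (norm_nonneg _)
            (mul_nonneg hC₁pos.le (mul_nonneg (St12.ksq_nonneg _) (norm_nonneg _)))
      _ = ∑' p : ℤ × ℤ, (C₁ * (ksq (wn L₁ L₂ l) * ‖f l‖)) *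
            (|bcoef L₁ L₂ p (l - p)| * (‖ω p‖ * ‖ω (l - p)‖)) := tsum_mul_left.symm
      _ ≤ ∑' p : ℤ × ℤ, (C₁ * (St12.rr L₁ L₂ l * ‖f l‖)) *
            (‖ω p‖ * (St12.rr L₁ L₂ (l - p) * ‖ω (l - p)‖) +
              (St12.al L₁ L₂ p * (St12.rr L₁ L₂ p * ‖ω p‖)) *
                (ksq (wn L₁ L₂ (l - p)) * ‖ω (l - p)‖)) :=
          Summable.tsum_le_tsum hpt ((hbsum l).mul_left _) ((s1.add s2).mul_left _)
      _ = _ := by rw [tsum_mul_left, Summable.tsum_add s1 s2]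
  have hGsum' : Summable fun l : ℤ × ℤ => (C₁ * (St12.rr L₁ L₂ l * ‖f l‖)) *
      ((∑' p : ℤ × ℤ, ‖ω p‖ * (St12.rr L₁ L₂ (l - p) * ‖ω (l - p)‖)) +
        ∑' p : ℤ × ℤ, (St12.al L₁ L₂ p * (St12.rr L₁ L₂ p * ‖ω p‖)) *
          (ksq (wn L₁ L₂ (l - p)) * ‖ω (l - p)‖)) :=
    ((hsum1'.add hsum2').mul_left C₁).congr fun l => by ring
  have hGsum : Summable fun l : ℤ × ℤ => ‖iOm L₁ L₂ f l‖ * ‖bconv L₁ L₂ ω ω l‖ :=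
    Summable.of_nonneg_of_le (fun l => mul_nonneg (norm_nonneg _) (norm_nonneg _)) hGle hGsum'
  have hnormconj : ∀ l : ℤ × ℤ,
      ‖iOm L₁ L₂ f l * (starRingEnd ℂ) (bconv L₁ L₂ ω ω l)‖
        = ‖iOm L₁ L₂ f l‖ * ‖bconv L₁ L₂ ω ω l‖ := fun l => by
    rw [norm_mul, RCLike.norm_conj]
  have hmain1 : ‖ip L₁ L₂ (iOm L₁ L₂ f) (bconv L₁ L₂ ω ω)‖ ≤
      (L₁ * L₂) * ∑' l : ℤ × ℤ, ‖iOm L₁ L₂ f l‖ * ‖bconv L₁ L₂ ω ω l‖ := by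
    rw [ip, norm_mul, Complex.norm_real, Real.norm_eq_abs, abs_of_pos hMpos]
    refine mul_le_mul_of_nonneg_left ?_ hMpos.le
    calc ‖∑' n : ℤ × ℤ, iOm L₁ L₂ f n * (starRingEnd ℂ) (bconv L₁ L₂ ω ω n)‖
        ≤ ∑' n : ℤ × ℤ, ‖iOm L₁ L₂ f n * (starRingEnd ℂ) (bconv L₁ L₂ ω ω n)‖ :=
          norm_tsum_le_tsum_norm (hGsum.congr fun l => (hnormconj l).symm)
      _ = _ := tsum_congr hnormconj
  -- the sqrt(hsq) identities
  have hhf : Real.sqrt (hsq L₁ L₂ 1 f)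
      = Real.sqrt (L₁ * L₂) * Real.sqrt (∑' l : ℤ × ℤ, (St12.rr L₁ L₂ l * ‖f l‖) ^ 2) := by
    rw [hsq, Real.sqrt_mul hMpos.le]
    congr 2
    exact tsum_congr fun n => by rw [mul_pow, St12.rr_sq, Real.rpow_one]
  have hh1 : Real.sqrt (hsq L₁ L₂ 1 ω)
      = Real.sqrt (L₁ * L₂) * Real.sqrt (∑' k : ℤ × ℤ, (St12.rr L₁ L₂ k * ‖ω k‖) ^ 2) := by
    rw [hsq, Real.sqrt_mul hMpos.le]
    congr 2
    exact tsum_congr fun n => by rw [mul_pow, St12.rr_sq, Real.rpow_one]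
  have hh2 : Real.sqrt (hsq L₁ L₂ 2 ω)
      = Real.sqrt (L₁ * L₂) * Real.sqrt (∑' k : ℤ × ℤ, (ksq (wn L₁ L₂ k) * ‖ω k‖) ^ 2) := by
    rw [hsq, Real.sqrt_mul hMpos.le]
    congr 2
    refine tsum_congr fun n => ?_
    rw [mul_pow, show ((2:ℝ)) = ((2:ℕ):ℝ) by norm_num, Real.rpow_natCast]
  -- final assembly
  calc ‖ip L₁ L₂ (iOm L₁ L₂ f) (bconv L₁ L₂ ω ω)‖
      ≤ (L₁ * L₂) * ∑' l : ℤ × ℤ, ‖iOm L₁ L₂ f l‖ * ‖bconv L₁ L₂ ω ω l‖ := hmain1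
    _ ≤ (L₁ * L₂) * (C₁ * ((∑' l : ℤ × ℤ, (St12.rr L₁ L₂ l * ‖f l‖) *
          ∑' p : ℤ × ℤ, ‖ω p‖ * (St12.rr L₁ L₂ (l - p) * ‖ω (l - p)‖)) +
        ∑' l : ℤ × ℤ, (St12.rr L₁ L₂ l * ‖f l‖) *
          ∑' p : ℤ × ℤ, (St12.al L₁ L₂ p * (St12.rr L₁ L₂ p * ‖ω p‖)) *
            (ksq (wn L₁ L₂ (l - p)) * ‖ω (l - p)‖))) := by
        refine mul_le_mul_of_nonneg_left ?_ hMpos.le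
        calc (∑' l : ℤ × ℤ, ‖iOm L₁ L₂ f l‖ * ‖bconv L₁ L₂ ω ω l‖)
            ≤ ∑' l : ℤ × ℤ, (C₁ * (St12.rr L₁ L₂ l * ‖f l‖)) *
              ((∑' p : ℤ × ℤ, ‖ω p‖ * (St12.rr L₁ L₂ (l - p) * ‖ω (l - p)‖)) +
                ∑' p : ℤ × ℤ, (St12.al L₁ L₂ p * (St12.rr L₁ L₂ p * ‖ω p‖)) *
                  (ksq (wn L₁ L₂ (l - p)) * ‖ω (l - p)‖)) :=
              Summable.tsum_le_tsum hGle hGsum hGsum'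
          _ = _ := by
              rw [← Summable.tsum_add hsum1' hsum2', ← tsum_mul_left]
              exact tsum_congr fun l => by ring
    _ ≤ (L₁ * L₂) * (C₁ *
        ((Real.sqrt (Sα + 1) * Real.sqrt (∑' k : ℤ × ℤ, (ksq (wn L₁ L₂ k) * ‖ω k‖) ^ 2)) *
            (Real.sqrt (∑' l : ℤ × ℤ, (St12.rr L₁ L₂ l * ‖f l‖) ^ 2) *
              Real.sqrt (∑' k : ℤ × ℤ, (St12.rr L₁ L₂ k * ‖ω k‖) ^ 2)) +
          (Real.sqrt (Sα + 1) * Real.sqrt (∑' k : ℤ × ℤ, (St12.rr L₁ L₂ k * ‖ω k‖) ^ 2)) *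
            (Real.sqrt (∑' l : ℤ × ℤ, (St12.rr L₁ L₂ l * ‖f l‖) ^ 2) *
              Real.sqrt (∑' k : ℤ × ℤ, (ksq (wn L₁ L₂ k) * ‖ω k‖) ^ 2)))) := by
        refine mul_le_mul_of_nonneg_left (mul_le_mul_of_nonneg_left ?_ hC₁pos.le) hMpos.le
        refine add_le_add
          (hle1'.trans (mul_le_mul_of_nonneg_right hU₁
            (mul_nonneg (Real.sqrt_nonneg _) (Real.sqrt_nonneg _))))
          (hle2'.trans (mul_le_mul_of_nonneg_right hU₂
            (mul_nonneg (Real.sqrt_nonneg _) (Real.sqrt_nonneg _))))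
    _ = 2 * C₁ * Real.sqrt (Sα + 1) / Real.sqrt (L₁ * L₂) * Real.sqrt (hsq L₁ L₂ 1 f) *
          Real.sqrt (hsq L₁ L₂ 1 ω) * Real.sqrt (hsq L₁ L₂ 2 ω) := by
        rw [hhf, hh1, hh2]
        have hss : Real.sqrt (L₁ * L₂) * Real.sqrt (L₁ * L₂) = L₁ * L₂ :=
          Real.mul_self_sqrt hMpos.le
        have hs0 : Real.sqrt (L₁ * L₂) ≠ 0 := (Real.sqrt_pos.mpr hMpos).ne'
        generalize hgen : Real.sqrt (L₁ * L₂) = s at hss hs0 ⊢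
        rw [← hss]
        field_simp
        ring

end
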